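/- Let T₁, T₂: V → g be compatible O-operators on a bimodule (V; L, R) over a pre-Lie algebra (g, ·), with T₂ invertible. Then N = T₁ ∘ T₂⁻¹ is a Nijenhuis operator on (g, ·). -/
import Mathlib


def PreLieFn {g : Type*} [AddCommGroup g] (m : g → g → g) : Prop :=
  ∀ x y z : g, m (m x y) z - m x (m y z) = m (m y x) z - m y (m x z)

def BimodFn {g V : Type*} [AddCommGroup g] [AddCommGroup V]
    (m : g → g → g) (L R : g → V → V) : Prop :=
  (∀ (x y : g) (u : V), L x (L y u) - L (m x y) u = L y (L x u) - L (m y x) u) ∧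
  (∀ (x y : g) (u : V), L x (R y u) - R y (L x u) = R (m x y) u - R y (R x u))

def NijFn {g : Type*} [AddCommGroup g] (m : g → g → g) (N : g → g) : Prop :=
  ∀ x y : g, m (N x) (N y) = N (m (N x) y + m x (N y) - N (m x y))

def IsOOp {K g V : Type*} [Field K] [AddCommGroup g] [Module K g]
    [AddCommGroup V] [Module K V]
    (m : g →ₗ[K] g →ₗ[K] g) (L R : g →ₗ[K] Module.End K V) (T : V →ₗ[K] g) : Prop :=
  ∀ u v : V, m (T u) (T v) = T (L (T u) v + R (T v) u)

/-- if T₁, T₂ are compatible O-operators with T₂ invertible, then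
N = T₁ ∘ T₂⁻¹ is a Nijenhuis operator on (g, ·). -/
theorem compatible_O_operators_nijenhuis {K g V : Type*} [Field K]
    [AddCommGroup g] [Module K g] [AddCommGroup V] [Module K V]
    (m : g →ₗ[K] g →ₗ[K] g) (hm : PreLieFn (fun x y => m x y))
    (L R : g →ₗ[K] Module.End K V)
    (hb : BimodFn (fun x y => m x y) (fun x u => L x u) (fun x u => R x u))
    (T₁ : V →ₗ[K] g) (e : V ≃ₗ[K] g)
    (hT₁ : IsOOp m L R T₁) (hT₂ : IsOOp m L R (e : V →ₗ[K] g))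
    (hcompat : ∀ k₁ k₂ : K, IsOOp m L R (k₁ • T₁ + k₂ • (e : V →ₗ[K] g))) :
    NijFn (fun x y => m x y) (fun x : g => T₁ (e.symm x)) := by
  intro x y
  set u := e.symm x with hu
  set v := e.symm y with hv
  have hx : e u = x := e.apply_symm_apply x
  have hy : e v = y := e.apply_symm_apply y
  have h1 := hT₁ u v
  have h2 := hT₂ u v
  have h12 := hcompat 1 1 u v
  simp only [LinearMap.add_apply, LinearMap.smul_apply, one_smul, LinearEquiv.coe_coe,
    map_add] at h1 h2 h12
  have heinv : e.symm (m x y) = L x v + R y u := by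
    rw [← hx, ← hy, h2, ← map_add, e.symm_apply_apply]
  have hmix : m (T₁ u) y + m x (T₁ v)
      = T₁ (L x v + R y u) + e (L (T₁ u) v + R (T₁ v) u) := by
    rw [← hx, ← hy]
    simp only [map_add]
    have key : m (T₁ u) (e v) + m (e u) (T₁ v)
        - (T₁ (L (e u) v) + T₁ (R (e v) u) + (e (L (T₁ u) v) + e (R (T₁ v) u)))
        = (m (T₁ u) (T₁ v) + m (e u) (T₁ v) + (m (T₁ u) (e v) + m (e u) (e v))
            - (T₁ (L (T₁ u) v) + e (L (T₁ u) v) + (T₁ (L (e u) v) + e (L (e u) v))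
              + (T₁ (R (T₁ v) u) + e (R (T₁ v) u) + (T₁ (R (e v) u) + e (R (e v) u)))))
          - (m (T₁ u) (T₁ v) - (T₁ (L (T₁ u) v) + T₁ (R (T₁ v) u)))
          - (m (e u) (e v) - (e (L (e u) v) + e (R (e v) u))) := by
      abel
    rw [sub_eq_zero.mpr h12, sub_eq_zero.mpr h1, sub_eq_zero.mpr h2] at key
    simp only [sub_zero, zero_sub, neg_zero] at key
    exact sub_eq_zero.mp key
  have hkey : L (T₁ u) v + R (T₁ v) u
      = e.symm (m (T₁ u) y + m x (T₁ v) - T₁ (e.symm (m x y))) := by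
    rw [heinv, hmix, add_sub_cancel_left, e.symm_apply_apply]
  show m (T₁ u) (T₁ v) = T₁ (e.symm (m (T₁ u) y + m x (T₁ v) - T₁ (e.symm (m x y))))
  rw [← hkey, h1, map_add]
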